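/- Let a > 0, b > 0, x* > 0 and α, β ∈ [0, 1). Every complex eigenvalue of the 2×2 matrix [[-2(1-α) a x*, 1-α], [(1-β) b, 0]] (the Jacobian of the Hénon system with constant VMTOC control (α, β) at the equilibrium) has modulus strictly less than 1 if and only if 2(1-α) a x* + (1-α)(1-β) b < 1. -/

import Mathlib

/-- **Local stability condition for the controlled Hénon map.**
Let `a, b, x* > 0` and `α, β ∈ [0,1)`. All complex eigenvalues of the Jacobian
`[[-2(1-α) a x*, 1-α], [(1-β) b, 0]]` of the Hénon system with constant VMTOC control
`(α, β)` at the equilibrium lie strictly inside the unit circle if and only if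
`2(1-α) a x* + (1-α)(1-β) b < 1`. -/
theorem henon_vmtoc_jacobian_stable_iff
    (a b xs α β : ℝ) (ha : 0 < a) (hb : 0 < b) (hxs : 0 < xs)
    (hα : α ∈ Set.Ico (0 : ℝ) 1) (hβ : β ∈ Set.Ico (0 : ℝ) 1)
    (M : Matrix (Fin 2) (Fin 2) ℝ)
    (hM : M = !![-2 * (1 - α) * a * xs, 1 - α; (1 - β) * b, 0]) :
    (∀ lam : ℂ, lam ^ 2 - (M.trace : ℂ) * lam + (M.det : ℂ) = 0 → ‖lam‖ < 1) ↔
    2 * (1 - α) * a * xs + (1 - α) * (1 - β) * b < 1 := by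
  obtain ⟨hα0, hα1⟩ := hα
  obtain ⟨hβ0, hβ1⟩ := hβ
  have hα1' : 0 < 1 - α := by linarith
  have hβ1' : 0 < 1 - β := by linarith
  set A := 2 * (1 - α) * a * xs with hA
  set B := (1 - α) * (1 - β) * b with hB
  have hApos : 0 < A := by positivity
  have hBpos : 0 < B := by positivity
  have htr : M.trace = -A := by subst hM; simp [Matrix.trace_fin_two, hA]
  have hdet : M.det = -B := by
    subst hM
    rw [Matrix.det_fin_two_of]
    simp [hB]; ring
  rw [htr, hdet]
  set s := Real.sqrt (A ^ 2 + 4 * B) with hsdef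
  have hs0 : 0 ≤ s := Real.sqrt_nonneg _
  have hs2 : s ^ 2 = A ^ 2 + 4 * B := Real.sq_sqrt (by positivity)
  have hsA : A < s := by nlinarith
  have hc : (s : ℂ) ^ 2 = (A : ℂ) ^ 2 + 4 * (B : ℂ) := by exact_mod_cast hs2
  constructor
  · intro h
    have hr := h ((((-A - s) / 2 : ℝ)) : ℂ) ?_
    · rw [Complex.norm_real, Real.norm_eq_abs] at hr
      rw [abs_of_nonpos (by linarith)] at hr
      -- hr : -((-A - s)/2) < 1, i.e. (A+s)/2 < 1
      have hlt : s < 2 - A := by linarith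
      nlinarith
    · push_cast
      linear_combination hc / 4
  · intro hcond lam hlam
    have hfac : (lam - (((-A + s) / 2 : ℝ) : ℂ)) * (lam - (((-A - s) / 2 : ℝ) : ℂ)) = 0 := by
      push_cast
      push_cast at hlam
      linear_combination hlam - hc / 4
    rcases mul_eq_zero.mp hfac with h1 | h1
    · have : lam = (((-A + s) / 2 : ℝ) : ℂ) := by linear_combination h1
      rw [this, Complex.norm_real, Real.norm_eq_abs, abs_of_nonneg (by linarith)]
      nlinarith
    · have : lam = (((-A - s) / 2 : ℝ) : ℂ) := by linear_combination h1
      rw [this, Complex.norm_real, Real.norm_eq_abs, abs_of_nonpos (by linarith)]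
      nlinarith
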